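/- Every moment sequence has a finitely atomic representing measure: if A = {a_1,...,a_m} are measurable real-valued functions on a measurable space (X, 𝔄) and μ is a positive measure on (X, 𝔄) such that each a_i is μ-integrable, then there exist k ≤ m points x_1,...,x_k ∈ X and positive reals c_1,...,c_k such that ∫ a_i dμ = Σ_{j=1}^k c_j · a_i(x_j) for all i = 1,...,m. -/

import Mathlib

open MeasureTheory

open Finset in

/-- Carathéodory for convex cones. -/
theorem carath_cone {m : ℕ} {ι : Type*} (w : ι → (Fin m → ℝ)) (s : Finset ι) :
    ∀ (c : ι → ℝ), (∀ j ∈ s, 0 ≤ c j) →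
    ∃ t : Finset ι, t ⊆ s ∧ t.card ≤ m ∧ ∃ d : ι → ℝ, (∀ j ∈ t, 0 < d j) ∧
      ∑ j ∈ t, d j • w j = ∑ j ∈ s, c j • w j := by
  classical
  induction s using Finset.strongInduction with
  | _ s ih =>
  intro c hc
  by_cases hz : ∀ j ∈ s, c j ≠ 0
  · -- all coefficients positive
    have hpos : ∀ j ∈ s, 0 < c j := fun j hj => lt_of_le_of_ne (hc j hj) (Ne.symm (hz j hj))
    by_cases hli : LinearIndependent ℝ (fun j : ↥s => w j)
    · refine ⟨s, subset_rfl, ?_, c, hpos, rfl⟩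
      have := hli.fintype_card_le_finrank
      simpa [Module.finrank_pi] using this
    · obtain ⟨g, hgsum, j₁, hj₁⟩ := Fintype.not_linearIndependent_iff.mp hli
      -- extend to ι
      set gg : ι → ℝ := fun j => if h : j ∈ s then g ⟨j, h⟩ else 0 with hgg
      have hsum' : ∀ (g' : ι → ℝ), (∀ j (h : j ∈ s), g' j = g ⟨j, h⟩) →
          ∑ j ∈ s, g' j • w j = ∑ i : ↥s, g i • w i := by
        intro g' hg'
        rw [← Finset.sum_coe_sort s (fun j => g' j • w j)]
        exact Finset.sum_congr rfl fun i _ => by rw [hg' i.1 i.2]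
      have key : ∃ g' : ι → ℝ, (∑ j ∈ s, g' j • w j = 0) ∧ (∃ j ∈ s, 0 < g' j) := by
        rcases lt_trichotomy (g j₁) 0 with h | h | h
        · refine ⟨-gg, ?_, j₁.1, j₁.2, ?_⟩
          · have := hsum' gg (fun j h => by simp [hgg, h])
            simp only [Pi.neg_apply, neg_smul, Finset.sum_neg_distrib]
            rw [this, hgsum, neg_zero]
          · simp only [Pi.neg_apply, hgg, dif_pos j₁.2]
            simpa using h
        · exact absurd h hj₁
        · refine ⟨gg, ?_, j₁.1, j₁.2, ?_⟩
          · rw [hsum' gg (fun j h => by simp [hgg, h]), hgsum]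
          · simpa [hgg, j₁.2] using h
      obtain ⟨g', hg'sum, jw, hjw, hjwpos⟩ := key
      set T := s.filter (fun j => 0 < g' j) with hT
      have hTne : T.Nonempty := ⟨jw, Finset.mem_filter.mpr ⟨hjw, hjwpos⟩⟩
      obtain ⟨j₀, hj₀T, hmin⟩ := T.exists_min_image (fun j => c j / g' j) hTne
      have hj₀s : j₀ ∈ s := (Finset.mem_filter.mp hj₀T).1
      have hgj₀ : 0 < g' j₀ := (Finset.mem_filter.mp hj₀T).2
      set r := c j₀ / g' j₀ with hr
      have hrpos : 0 < r := div_pos (hpos j₀ hj₀s) hgj₀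
      set c' : ι → ℝ := fun j => c j - r * g' j with hc'
      have hc'nonneg : ∀ j ∈ s, 0 ≤ c' j := by
        intro j hj
        by_cases hg : 0 < g' j
        · have hjT : j ∈ T := Finset.mem_filter.mpr ⟨hj, hg⟩
          have := hmin j hjT
          have : r * g' j ≤ c j := by
            rw [hr]
            calc c j₀ / g' j₀ * g' j ≤ c j / g' j * g' j := by
                  apply mul_le_mul_of_nonneg_right (hmin j hjT) hg.le
              _ = c j := div_mul_cancel₀ _ hg.ne'
          simpa [hc', sub_nonneg] using this
        · push_neg at hg
          have : r * g' j ≤ 0 := mul_nonpos_of_nonneg_of_nonpos hrpos.le hg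
          simp only [hc']
          linarith [hc j hj]
      have hc'j₀ : c' j₀ = 0 := by
        simp [hc', hr, div_mul_cancel₀ _ hgj₀.ne']
      have hsumeq : ∑ j ∈ s, c' j • w j = ∑ j ∈ s, c j • w j := by
        simp only [hc', sub_smul, Finset.sum_sub_distrib, mul_smul]
        rw [← Finset.smul_sum, hg'sum, smul_zero, sub_zero]
      set s'' := s.filter (fun j => c' j ≠ 0) with hs''
      have hss : s'' ⊂ s := by
        refine Finset.ssubset_iff_of_subset (Finset.filter_subset _ _) |>.mpr ?_
        exact ⟨j₀, hj₀s, fun h => (Finset.mem_filter.mp h).2 hc'j₀⟩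
      have hsum'' : ∑ j ∈ s'', c' j • w j = ∑ j ∈ s, c' j • w j := by
        apply Finset.sum_filter_of_ne
        intro j _ hne
        intro h
        apply hne
        rw [h, zero_smul]
      obtain ⟨t, hts, htcard, d, hd, hdsum⟩ := ih s'' hss c'
        (fun j hj => hc'nonneg j (Finset.mem_filter.mp hj).1)
      exact ⟨t, hts.trans (Finset.filter_subset _ _), htcard, d, hd,
        by rw [hdsum, hsum'', hsumeq]⟩
  · push_neg at hz
    obtain ⟨j₀, hj₀, hcj₀⟩ := hz
    set s' := s.filter (fun j => c j ≠ 0) with hs'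
    have hss : s' ⊂ s := by
      refine Finset.ssubset_iff_of_subset (Finset.filter_subset _ _) |>.mpr ?_
      exact ⟨j₀, hj₀, fun h => (Finset.mem_filter.mp h).2 hcj₀⟩
    have hsum' : ∑ j ∈ s', c j • w j = ∑ j ∈ s, c j • w j := by
      apply Finset.sum_filter_of_ne
      intro j _ hne h
      exact hne (by rw [h, zero_smul])
    obtain ⟨t, hts, htcard, d, hd, hdsum⟩ := ih s' hss c
      (fun j hj => hc j (Finset.mem_filter.mp hj).1)
    exact ⟨t, hts.trans (Finset.filter_subset _ _), htcard, d, hd, by rw [hdsum, hsum']⟩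

universe u

open Finset in

theorem richterAux (m : ℕ) : ∀ {X : Type u} [MeasurableSpace X] (a : Fin m → X → ℝ),
    (∀ i, Measurable (a i)) → ∀ (μ : Measure X), (∀ i, Integrable (a i) μ) →
    ∃ (k : ℕ), k ≤ m ∧ ∃ (x : Fin k → X) (c : Fin k → ℝ),
      (∀ j, 0 < c j) ∧ ∀ i, ∫ y, a i y ∂μ = ∑ j, c j * a i (x j) := by
  induction m with
  | zero =>
    intro X _ a ha μ hint
    exact ⟨0, le_rfl, Fin.elim0, Fin.elim0, fun j => j.elim0, fun i => i.elim0⟩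
  | succ n IH =>
    intro X _ a ha μ hint
    classical
    set avec : X → (Fin (n+1) → ℝ) := fun x i => a i x with havec
    have hLsum : ∀ (L : (Fin (n+1) → ℝ) →ₗ[ℝ] ℝ) (x : X),
        L (avec x) = ∑ i, a i x * L (fun j => if i = j then 1 else 0) := by
      intro L x
      rw [LinearMap.pi_apply_eq_sum_univ L (avec x)]
      simp [avec, smul_eq_mul]
    have hmeasL : ∀ (L : (Fin (n+1) → ℝ) →ₗ[ℝ] ℝ), Measurable (fun x => L (avec x)) := by
      intro L
      have : (fun x => L (avec x)) =
          fun x => ∑ i, a i x * L (fun j => if i = j then 1 else 0) := funext (hLsum L)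
      rw [this]
      exact Finset.measurable_sum _ fun i _ => (ha i).mul_const _
    have hintL : ∀ (L : (Fin (n+1) → ℝ) →ₗ[ℝ] ℝ), Integrable (fun x => L (avec x)) μ := by
      intro L
      have : (fun x => L (avec x)) =
          fun x => ∑ i, a i x * L (fun j => if i = j then 1 else 0) := funext (hLsum L)
      rw [this]
      exact integrable_finset_sum _ fun i _ => (hint i).mul_const _
    have hintegralL : ∀ (L : (Fin (n+1) → ℝ) →ₗ[ℝ] ℝ),
        ∫ x, L (avec x) ∂μ = L (fun i => ∫ y, a i y ∂μ) := by
      intro L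
      have h1 : ∫ x, L (avec x) ∂μ
          = ∑ i, (∫ y, a i y ∂μ) * L (fun j => if i = j then 1 else 0) := by
        rw [integral_congr_ae (Filter.Eventually.of_forall (hLsum L)),
          integral_finset_sum _ fun i _ => (hint i).mul_const _]
        exact Finset.sum_congr rfl fun i _ => integral_mul_const _ _
      rw [h1, LinearMap.pi_apply_eq_sum_univ L (fun i => ∫ y, a i y ∂μ)]
      simp [smul_eq_mul]
    by_cases hL : ∃ L : (Fin (n+1) → ℝ) →ₗ[ℝ] ℝ, L ≠ 0 ∧ ∀ᵐ x ∂μ, L (avec x) = 0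
    · obtain ⟨L, hL0, hae⟩ := hL
      have hi₀ : ∃ i₀, L (fun j => if i₀ = j then 1 else 0) ≠ 0 := by
        by_contra h
        push_neg at h
        apply hL0
        apply LinearMap.ext
        intro w
        rw [LinearMap.pi_apply_eq_sum_univ L w]
        simp [h]
      obtain ⟨i₀, hi₀⟩ := hi₀
      set X₀ : Set X := {x | L (avec x) = 0} with hX₀
      have hX₀meas : MeasurableSet X₀ := by
        have : X₀ = (fun x => L (avec x)) ⁻¹' {0} := rfl
        rw [this]
        exact (hmeasL L) (measurableSet_singleton 0)
      have hrestrict : μ.restrict X₀ = μ := Measure.restrict_eq_self_of_ae_mem hae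
      set ν : Measure X₀ := μ.comap Subtype.val with hν
      have hmap : ν.map Subtype.val = μ := by
        rw [hν, map_comap_subtype_coe hX₀meas, hrestrict]
      set b : Fin n → X₀ → ℝ := fun j y => a (i₀.succAbove j) y.1 with hb
      have hbmeas : ∀ j, Measurable (b j) :=
        fun j => (ha _).comp measurable_subtype_coe
      have hbint : ∀ j, Integrable (b j) ν := by
        intro j
        have h := (MeasurableEmbedding.subtype_coe hX₀meas).integrable_map_iff
          (μ := ν) (g := a (i₀.succAbove j))
        rw [hmap] at h
        exact h.mp (hint _)
      have hbintegral : ∀ j, ∫ y, b j y ∂ν = ∫ x, a (i₀.succAbove j) x ∂μ := by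
        intro j
        conv_rhs => rw [← hmap]
        rw [(MeasurableEmbedding.subtype_coe hX₀meas).integral_map]
      obtain ⟨k, hk, y, c, hc, hrep⟩ := IH b hbmeas ν hbint
      refine ⟨k, hk.trans (Nat.le_succ n), fun l => (y l).1, c, hc, ?_⟩
      set E : Fin (n+1) → ℝ := fun i => (∫ x, a i x ∂μ) - ∑ l, c l * a i ((y l).1) with hE
      have hE_sA : ∀ j, E (i₀.succAbove j) = 0 := by
        intro j
        have := hrep j
        rw [hbintegral j] at this
        simp only [hE, b] at this ⊢
        rw [this, sub_self]
      have hEsum : ∑ i, E i * L (fun j => if i = j then 1 else 0) = 0 := by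
        have h1 : ∑ i, (∫ x, a i x ∂μ) * L (fun j => if i = j then 1 else 0) = 0 := by
          have h2 : ∫ x, L (avec x) ∂μ = 0 := integral_eq_zero_of_ae hae
          rw [hintegralL L, LinearMap.pi_apply_eq_sum_univ L (fun i => ∫ y, a i y ∂μ)] at h2
          simpa [smul_eq_mul] using h2
        have hx₀ : ∀ l, L (avec ((y l).1)) = 0 := fun l => (y l).2
        have h3 : ∑ i, (∑ l, c l * a i ((y l).1)) * L (fun j => if i = j then 1 else 0)
            = 0 := by
          have : ∑ i, (∑ l, c l * a i ((y l).1)) * L (fun j => if i = j then 1 else 0)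
              = ∑ l, c l * L (avec ((y l).1)) := by
            simp_rw [Finset.sum_mul]
            rw [Finset.sum_comm]
            refine Finset.sum_congr rfl fun l _ => ?_
            rw [hLsum L ((y l).1), Finset.mul_sum]
            exact Finset.sum_congr rfl fun i _ => by ring
          rw [this]
          simp [hx₀]
        simp only [hE, sub_mul, Finset.sum_sub_distrib, h1, h3, sub_zero]
      have hEi₀ : E i₀ = 0 := by
        rw [Fin.sum_univ_succAbove _ i₀] at hEsum
        simp only [hE_sA, zero_mul, Finset.sum_const_zero, add_zero] at hEsum
        exact (mul_eq_zero.mp hEsum).resolve_right hi₀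
      intro i
      rcases eq_or_ne i i₀ with rfl | hne
      · exact sub_eq_zero.mp hEi₀
      · obtain ⟨j, rfl⟩ := Fin.exists_succAbove_eq hne
        exact sub_eq_zero.mp (hE_sA j)
    · -- Separation branch: the moment vector lies in the cone generated by `avec`.
      push_neg at hL
      set v : Fin (n+1) → ℝ := fun i => ∫ y, a i y ∂μ with hvdef
      set C : Set (Fin (n+1) → ℝ) := {w | ∃ (N : ℕ) (x : Fin N → X) (c : Fin N → ℝ),
        (∀ j, 0 ≤ c j) ∧ w = ∑ j, c j • avec (x j)} with hCdef
      have h0C : (0 : Fin (n+1) → ℝ) ∈ C := ⟨0, Fin.elim0, Fin.elim0, fun j => j.elim0, by simp⟩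
      have havecC : ∀ x : X, avec x ∈ C :=
        fun x => ⟨1, fun _ => x, fun _ => 1, fun _ => zero_le_one, by simp⟩
      have hCsmul : ∀ (r : ℝ), 0 ≤ r → ∀ w ∈ C, r • w ∈ C := by
        rintro r hr w ⟨N, x, c, hc, rfl⟩
        refine ⟨N, x, fun j => r * c j, fun j => mul_nonneg hr (hc j), ?_⟩
        rw [Finset.smul_sum]
        exact Finset.sum_congr rfl fun j _ => smul_smul _ _ _
      have hCadd : ∀ w₁ ∈ C, ∀ w₂ ∈ C, w₁ + w₂ ∈ C := by
        rintro w₁ ⟨N₁, x₁, c₁, hc₁, rfl⟩ w₂ ⟨N₂, x₂, c₂, hc₂, rfl⟩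
        refine ⟨N₁ + N₂, Fin.append x₁ x₂, Fin.append c₁ c₂, ?_, ?_⟩
        · intro j
          refine Fin.addCases (fun j₁ => ?_) (fun j₂ => ?_) j
          · simp [hc₁ j₁]
          · simp [hc₂ j₂]
        · rw [Fin.sum_univ_add]
          simp
      have hconv : Convex ℝ C := by
        intro w₁ h₁ w₂ h₂ p q hp hq hpq
        exact hCadd _ (hCsmul p hp w₁ h₁) _ (hCsmul q hq w₂ h₂)
      -- the range of `avec` spans everything
      have hspan : Submodule.span ℝ (Set.range avec) = ⊤ := by
        by_contra h
        obtain ⟨f, hf0, hfmap⟩ := Submodule.exists_dual_map_eq_bot_of_lt_top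
          (lt_top_iff_ne_top.mpr h) inferInstance
        refine hL f hf0 ?_
        refine Filter.Eventually.of_forall fun x => ?_
        have hmem : avec x ∈ Submodule.span ℝ (Set.range avec) :=
          Submodule.subset_span (Set.mem_range_self x)
        have : f (avec x) ∈ Submodule.map f (Submodule.span ℝ (Set.range avec)) :=
          Submodule.mem_map_of_mem hmem
        rw [hfmap] at this
        simpa using this
      -- an interior point of the cone
      obtain ⟨t, hts, htspan, hli⟩ := exists_linearIndependent ℝ (Set.range avec)
      rw [hspan] at htspan
      haveI : Fintype t := hli.setFinite.fintype
      set B : Module.Basis ↥t ℝ (Fin (n+1) → ℝ) := Module.Basis.mk hli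
        (by rw [Subtype.range_coe, htspan]) with hB
      have hBval : ∀ i : ↥t, B i = (i : Fin (n+1) → ℝ) := fun i => by rw [hB, Module.Basis.coe_mk]
      set U : Set (Fin (n+1) → ℝ) := ⋂ i : ↥t, (fun u => B.repr u i) ⁻¹' (Set.Ioi 0) with hU
      have hUopen : IsOpen U := by
        refine isOpen_iInter_of_finite fun i => ?_
        have hcont : Continuous fun u => B.repr u i := by
          have : (fun u => B.repr u i) = ⇑(B.coord i) := by
            funext u; rw [Module.Basis.coord_apply]
          rw [this]
          exact LinearMap.continuous_of_finiteDimensional _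
        exact isOpen_Ioi.preimage hcont
      have hUC : U ⊆ C := by
        intro u hu
        have hurepr : ∑ i : ↥t, B.repr u i • B i = u := B.sum_repr u
        have hchoice : ∀ i : ↥t, ∃ x : X, avec x = (i : Fin (n+1) → ℝ) := fun i => hts i.2
        choose xch hxch using hchoice
        refine ⟨Fintype.card ↥t, fun l => xch ((Fintype.equivFin ↥t).symm l),
          fun l => B.repr u ((Fintype.equivFin ↥t).symm l), fun l => ?_, ?_⟩
        · exact le_of_lt (Set.mem_iInter.mp hu ((Fintype.equivFin ↥t).symm l))
        · refine Eq.symm ?_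
          calc ∑ l : Fin (Fintype.card ↥t),
                B.repr u ((Fintype.equivFin ↥t).symm l) • avec (xch ((Fintype.equivFin ↥t).symm l))
              = ∑ i : ↥t, B.repr u i • avec (xch i) :=
                Equiv.sum_comp (Fintype.equivFin ↥t).symm (fun i => B.repr u i • avec (xch i))
            _ = ∑ i : ↥t, B.repr u i • B i :=
                Finset.sum_congr rfl fun i _ => by rw [hxch i, hBval i]
            _ = u := hurepr
      set w₀ : Fin (n+1) → ℝ := B.equivFun.symm (fun _ => 1) with hw₀def
      have hw₀repr : ∀ i : ↥t, B.repr w₀ i = 1 := by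
        intro i
        have : B.equivFun w₀ = fun _ => 1 := B.equivFun.apply_symm_apply _
        have h2 := congrFun this i
        rwa [Module.Basis.equivFun_apply] at h2
      have hw₀U : w₀ ∈ U := Set.mem_iInter.mpr fun i => by
        simp [hw₀repr i]
      have hw₀int : w₀ ∈ interior C := interior_maximal hUC hUopen hw₀U
      -- `v` belongs to the cone
      have hvC : v ∈ C := by
        by_contra hv
        have hvD : v ∉ interior (closure C) := by
          intro hvD
          obtain ⟨ε, hε, hball⟩ := Metric.isOpen_iff.mp isOpen_interior v hvD
          by_cases hvw : v = w₀
          · exact hv (interior_subset (hvw ▸ hw₀int))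
          · have hnorm : 0 < ‖v - w₀‖ := by
              simpa [sub_ne_zero] using norm_pos_iff.mpr (sub_ne_zero.mpr hvw)
            set δ : ℝ := ε / (2 * ‖v - w₀‖) with hδ
            have hδpos : 0 < δ := div_pos hε (by positivity)
            set z := v + δ • (v - w₀) with hz
            have hzmem : z ∈ closure C := by
              have hzball : z ∈ Metric.ball v ε := by
                rw [Metric.mem_ball, dist_eq_norm]
                have h1 : z - v = δ • (v - w₀) := by rw [hz]; abel
                rw [h1, norm_smul, Real.norm_eq_abs, abs_of_pos hδpos, hδ]
                rw [div_mul_eq_mul_div, mul_comm (2 : ℝ) ‖v - w₀‖, ← div_div,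
                  mul_div_assoc, div_self hnorm.ne', mul_one]
                linarith
              exact interior_subset (hball hzball)
            have h1δ : (1:ℝ) + δ ≠ 0 := by positivity
            have hcomb : (δ/(1+δ)) • w₀ + (1/(1+δ)) • z = v := by
              rw [hz]
              match_scalars <;> field_simp <;> ring
            have hvint : v ∈ interior C := by
              have := hconv.combo_interior_closure_mem_interior (a := δ/(1+δ))
                (b := 1/(1+δ)) hw₀int hzmem (by positivity) (by positivity)
                (by field_simp; ring)
              rwa [hcomb] at this
            exact hv (interior_subset hvint)
        obtain ⟨f, hf⟩ := geometric_hahn_banach_open_point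
          (hconv.closure.interior) isOpen_interior hvD
        have hfle : ∀ w ∈ C, f w ≤ f v := by
          intro w hw
          have hseq : ∀ s : ℝ, s ∈ Set.Ioo (0:ℝ) 1 → f (s • w₀ + (1-s) • w) < f v := by
            intro s hs
            apply hf
            exact interior_mono subset_closure
              (hconv.combo_interior_closure_mem_interior hw₀int (subset_closure hw)
                hs.1 (by linarith [hs.2]) (by ring))
          haveI hNe : (nhdsWithin (0:ℝ) (Set.Ioo 0 1)).NeBot := by
            apply mem_closure_iff_nhdsWithin_neBot.mp
            rw [closure_Ioo (zero_ne_one)]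
            exact Set.left_mem_Icc.mpr zero_le_one
          have hcont : Filter.Tendsto (fun s : ℝ => f (s • w₀ + (1-s) • w))
              (nhdsWithin 0 (Set.Ioo 0 1)) (nhds (f w)) := by
            have hc : Continuous fun s : ℝ => f (s • w₀ + (1-s) • w) :=
              f.continuous.comp ((continuous_id'.smul continuous_const).add
                ((continuous_const.sub continuous_id').smul continuous_const))
            have h0 := hc.tendsto 0
            simp only [zero_smul, sub_zero, one_smul, zero_add] at h0
            exact h0.mono_left nhdsWithin_le_nhds
          exact le_of_tendsto hcont
            (eventually_mem_nhdsWithin.mono fun s hs => (hseq s hs).le)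
        have hfv0 : 0 ≤ f v := by simpa using hfle 0 h0C
        have hfC0 : ∀ w ∈ C, f w ≤ 0 := by
          intro w hw
          by_contra hpos
          push_neg at hpos
          have hsc := hfle (((f v + 1)/(f w)) • w)
            (hCsmul _ (div_nonneg (by linarith) hpos.le) w hw)
          rw [_root_.map_smul, smul_eq_mul, div_mul_cancel₀ _ hpos.ne'] at hsc
          linarith
        refine hL (f : (Fin (n+1) → ℝ) →ₗ[ℝ] ℝ) ?_ ?_
        · intro h0
          have hlt := hf w₀ (interior_mono subset_closure hw₀int)
          have : f w₀ = 0 := DFunLike.congr_fun h0 w₀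
          have hv0 : f v = 0 := DFunLike.congr_fun h0 v
          rw [this, hv0] at hlt
          exact lt_irrefl _ hlt
        · have hgle : ∀ x, f (avec x) ≤ 0 := fun x => hfC0 _ (havecC x)
          have hgi : Integrable (fun x => f (avec x)) μ := hintL (f : (Fin (n+1) → ℝ) →ₗ[ℝ] ℝ)
          have hI : ∫ x, f (avec x) ∂μ = f v := hintegralL (f : (Fin (n+1) → ℝ) →ₗ[ℝ] ℝ)
          have hneg : ∫ x, -(f (avec x)) ∂μ = -(f v) := by rw [integral_neg, hI]
          have hge : 0 ≤ ∫ x, -(f (avec x)) ∂μ :=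
            integral_nonneg fun x => neg_nonneg.mpr (hgle x)
          have hz : ∫ x, -(f (avec x)) ∂μ = 0 := by
            rw [hneg]
            have : -(f v) ≤ 0 := neg_nonpos.mpr hfv0
            rw [hneg] at hge
            linarith
          have haez := (integral_eq_zero_iff_of_nonneg_ae
            (Filter.Eventually.of_forall fun x => neg_nonneg.mpr (hgle x)) hgi.neg).mp hz
          filter_upwards [haez] with x hx
          have : -(f (avec x)) = 0 := hx
          have : f (avec x) = 0 := by linarith
          exact not_not.mpr this
      -- conic Caratheodory
      obtain ⟨N, x, c, hc, hvsum⟩ := hvC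
      obtain ⟨t', -, htcard, d, hd, hdsum⟩ :=
        carath_cone (fun j => avec (x j)) Finset.univ c (fun j _ => hc j)
      rw [← hvsum] at hdsum
      refine ⟨t'.card, by simpa using htcard, fun l => x (t'.equivFin.symm l).1,
        fun l => d (t'.equivFin.symm l).1,
        fun l => hd _ (t'.equivFin.symm l).2, ?_⟩
      intro i
      have h1 : v i = ∑ j ∈ t', d j * a i (x j) := by
        rw [← hdsum]
        rw [Finset.sum_apply]
        exact Finset.sum_congr rfl fun j _ => by simp [avec]
      have h2 : ∑ j ∈ t', d j * a i (x j)
          = ∑ l : Fin t'.card, d (t'.equivFin.symm l).1 * a i (x (t'.equivFin.symm l).1) := by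
        rw [← Finset.sum_coe_sort t' (fun j => d j * a i (x j))]
        exact (Equiv.sum_comp t'.equivFin.symm
          (fun j : ↥t' => d j.1 * a i (x j.1))).symm
      rw [show (∫ y, a i y ∂μ) = v i from rfl, h1, h2]

/-- **Richter's Theorem.** Every moment sequence has a `k`-atomic representing
measure with `k ≤ m`: if `a 1, …, a m` are measurable real-valued functions on a
measurable space `X` and `μ` is a positive measure making every `a i` integrable,
then there are `k ≤ m` points `x j` and positive weights `c j` with
`∫ a i dμ = ∑ j, c j * a i (x j)` for all `i`. -/
theorem richter {X : Type*} [MeasurableSpace X] {m : ℕ} (a : Fin m → X → ℝ)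
    (ha : ∀ i, Measurable (a i)) (μ : Measure X) (hint : ∀ i, Integrable (a i) μ) :
    ∃ (k : ℕ) (_ : k ≤ m) (x : Fin k → X) (c : Fin k → ℝ),
      (∀ j, 0 < c j) ∧ ∀ i, ∫ y, a i y ∂μ = ∑ j, c j * a i (x j) := by
  obtain ⟨k, hk, x, c, hc, h⟩ := richterAux m a ha μ hint
  exact ⟨k, hk, x, c, hc, h⟩
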